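/- Let D be a finite multi-set of integers and let k ≥ 1 be an integer. Partition D randomly into k² parts D_1, …, D_{k²} by assigning each element of D independently and uniformly at random to one of the k² parts. Then for every subset Z ⊆ D with |Z| = k, with probability at least 1/4 every part D_i contains at most one element of Z; consequently, with probability at least 1/4, σ(Z) ∈ (D_1 ∪ {0}) + (D_2 ∪ {0}) + ⋯ + (D_{k²} ∪ {0}), where each D_i is viewed as a set after removing duplicates. -/

import Mathlib

open Pointwise

private lemma mem_pointwise_sum_of_mem {ι : Type*} (s : Finset ι) (f : ι → ℕ)
    (t : ι → Finset ℕ) (h : ∀ i ∈ s, f i ∈ t i) :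
    ∑ i ∈ s, f i ∈ ∑ i ∈ s, t i := by
  classical
  induction s using Finset.induction with
  | empty => simp [Finset.mem_zero]
  | insert _ _ hx ih =>
      rw [Finset.sum_insert hx, Finset.sum_insert hx]
      exact Finset.add_mem_add (h _ (Finset.mem_insert_self _ _))
        (ih fun i hi => h i (Finset.mem_insert_of_mem hi))

private lemma weierstrass (s : Finset ℕ) (x : ℕ → ℝ) (h0 : ∀ i ∈ s, 0 ≤ x i)
    (h1 : ∀ i ∈ s, x i ≤ 1) : 1 - ∑ i ∈ s, x i ≤ ∏ i ∈ s, (1 - x i) := by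
  classical
  induction s using Finset.induction with
  | empty => simp
  | @insert a s hx ih =>
      rw [Finset.sum_insert hx, Finset.prod_insert hx]
      have ha0 := h0 a (Finset.mem_insert_self _ _)
      have ha1 := h1 a (Finset.mem_insert_self _ _)
      have hs0 : (0:ℝ) ≤ ∑ i ∈ s, x i :=
        Finset.sum_nonneg fun i hi => h0 i (Finset.mem_insert_of_mem hi)
      have ihs := ih (fun i hi => h0 i (Finset.mem_insert_of_mem hi))
        (fun i hi => h1 i (Finset.mem_insert_of_mem hi))
      nlinarith [mul_le_mul_of_nonneg_left ihs (by linarith : (0:ℝ) ≤ 1 - x a)]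

theorem stmt9 (n k : ℕ) (hk : 1 ≤ k) (d : Fin n → ℕ) (Zidx : Finset (Fin n))
    (hZ : Zidx.card = k) :
    (1 : ℝ) / 4 ≤
      ((((Finset.univ : Finset (Fin n → Fin (k ^ 2))).filter fun c =>
          (∀ i, (Zidx.filter fun j => c j = i).card ≤ 1) ∧
            (∑ j ∈ Zidx, d j) ∈
              ∑ i : Fin (k ^ 2),
                ((Finset.univ.filter fun j => c j = i).image d ∪ {0})).card : ℝ) /
        ((Finset.univ : Finset (Fin n → Fin (k ^ 2))).card : ℝ)) := by
  classical
  set m := k ^ 2 with hm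
  have hm0 : 0 < m := pow_pos hk 2
  have hkn : k ≤ n := by
    calc k = Zidx.card := hZ.symm
    _ ≤ (Finset.univ : Finset (Fin n)).card := Finset.card_le_card (Finset.subset_univ _)
    _ = n := by simp
  have hkm : k ≤ m := Nat.le_self_pow (by norm_num) k
  -- Step 1: the second conjunct follows from the first
  have hfilter :
      ((Finset.univ : Finset (Fin n → Fin m)).filter fun c =>
          (∀ i, (Zidx.filter fun j => c j = i).card ≤ 1) ∧
            (∑ j ∈ Zidx, d j) ∈
              ∑ i : Fin m, ((Finset.univ.filter fun j => c j = i).image d ∪ {0}))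
        = ((Finset.univ : Finset (Fin n → Fin m)).filter fun c =>
            ∀ i, (Zidx.filter fun j => c j = i).card ≤ 1) := by
    apply Finset.filter_congr
    intro c _
    refine and_iff_left_of_imp ?_
    intro h
    rw [← Finset.sum_fiberwise Zidx c d]
    apply mem_pointwise_sum_of_mem
    intro i _
    rcases Nat.le_one_iff_eq_zero_or_eq_one.mp (h i) with h0 | h1
    · rw [Finset.card_eq_zero.mp h0]
      simp
    · obtain ⟨j, hj⟩ := Finset.card_eq_one.mp h1
      rw [hj, Finset.sum_singleton]
      have hjm : j ∈ Zidx.filter fun j => c j = i := hj ▸ Finset.mem_singleton_self j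
      have hcj : c j = i := (Finset.mem_filter.mp hjm).2
      exact Finset.mem_union_left _
        (Finset.mem_image_of_mem d (Finset.mem_filter.mpr ⟨Finset.mem_univ _, hcj⟩))
  rw [hfilter]
  -- Step 2: count the colorings injective on Zidx
  have hPiff : ∀ c : Fin n → Fin m,
      (∀ i, (Zidx.filter fun j => c j = i).card ≤ 1) ↔
        Function.Injective fun j : {x // x ∈ Zidx} => c j := by
    intro c
    constructor
    · intro h j j' hjj'
      have h1 : (j : Fin n) ∈ Zidx.filter fun x => c x = c j :=
        Finset.mem_filter.mpr ⟨j.2, rfl⟩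
      have h2 : (j' : Fin n) ∈ Zidx.filter fun x => c x = c j :=
        Finset.mem_filter.mpr ⟨j'.2, hjj'.symm⟩
      exact Subtype.ext (Finset.card_le_one.mp (h (c j)) _ h1 _ h2)
    · intro h i
      rw [Finset.card_le_one]
      intro a ha b hb
      have ha' := Finset.mem_filter.mp ha
      have hb' := Finset.mem_filter.mp hb
      have := @h ⟨a, ha'.1⟩ ⟨b, hb'.1⟩ (by simp [ha'.2, hb'.2])
      exact congrArg Subtype.val this
  have hcount :
      ((Finset.univ : Finset (Fin n → Fin m)).filter fun c =>
          ∀ i, (Zidx.filter fun j => c j = i).card ≤ 1).card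
        = Nat.descFactorial m k * m ^ (n - k) := by
    rw [← Fintype.card_subtype]
    have e1 : {c : Fin n → Fin m // ∀ i, (Zidx.filter fun j => c j = i).card ≤ 1} ≃
        {g : {x // x ∈ Zidx} → Fin m // Function.Injective g} ×
          ({x : Fin n // ¬ x ∈ Zidx} → Fin m) := by
      refine (Equiv.subtypeEquiv (Equiv.piEquivPiSubtypeProd (· ∈ Zidx) fun _ => Fin m)
        fun c => ?_).trans (Equiv.prodSubtypeFstEquivSubtypeProd
          (p := fun g : {x // x ∈ Zidx} → Fin m => Function.Injective g))
      exact hPiff c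
    rw [Fintype.card_congr e1, Fintype.card_prod, Fintype.card_fun,
      Fintype.card_congr (Equiv.subtypeInjectiveEquivEmbedding _ _),
      Fintype.card_embedding_eq, Fintype.card_subtype_compl]
    have hcZ : Fintype.card {x // x ∈ Zidx} = k :=
      (Fintype.card_of_subtype Zidx fun x => Iff.rfl).trans hZ
    rw [hcZ, Fintype.card_fin, Fintype.card_fin]
  rw [hcount]
  -- Step 3: the probability bound
  have hcardU : ((Finset.univ : Finset (Fin n → Fin m)).card : ℝ) = (m : ℝ) ^ n := by
    rw [Finset.card_univ, Fintype.card_fun, Fintype.card_fin, Fintype.card_fin]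
    push_cast
    ring
  rw [hcardU]
  have hmR : (0:ℝ) < (m:ℝ) := by exact_mod_cast hm0
  have hpow : (m:ℝ) ^ n = (m:ℝ) ^ k * (m:ℝ) ^ (n - k) := by
    rw [← pow_add, Nat.add_sub_cancel' hkn]
  have hdesc : ((Nat.descFactorial m k : ℕ) : ℝ) = ∏ i ∈ Finset.range k, ((m:ℝ) - i) := by
    rw [Nat.descFactorial_eq_prod_range]
    push_cast [Nat.cast_prod]
    refine Finset.prod_congr rfl fun i hi => ?_
    have : i ≤ m := le_of_lt (lt_of_lt_of_le (Finset.mem_range.mp hi) hkm)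
    push_cast [Nat.cast_sub this]
    ring
  push_cast
  rw [hpow]
  have hpowne : (0:ℝ) < (m:ℝ) ^ (n - k) := pow_pos hmR _
  rw [mul_div_mul_right _ _ (ne_of_gt hpowne)]
  have key : (1:ℝ)/2 ≤ (Nat.descFactorial m k : ℝ) / (m:ℝ) ^ k := by
    have hprod : (Nat.descFactorial m k : ℝ) / (m:ℝ) ^ k
        = ∏ i ∈ Finset.range k, (1 - (i:ℝ)/m) := by
      have hne : (m:ℝ) ≠ 0 := ne_of_gt hmR
      have hconst : (m:ℝ)^k = ∏ _i ∈ Finset.range k, (m:ℝ) := by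
        rw [Finset.prod_const, Finset.card_range]
      rw [hdesc, hconst, ← Finset.prod_div_distrib]
      exact Finset.prod_congr rfl fun i _ => by rw [sub_div, div_self hne]
    rw [hprod]
    have hW := weierstrass (Finset.range k) (fun i => (i:ℝ)/m)
      (fun i _ => div_nonneg (Nat.cast_nonneg i) hmR.le)
      (fun i hi => by
        rw [div_le_one hmR]
        exact_mod_cast le_of_lt (lt_of_lt_of_le (Finset.mem_range.mp hi) hkm))
    refine le_trans ?_ hW
    have hsum : ∑ i ∈ Finset.range k, ((i:ℝ)/m) = (k * (k-1) / 2) / m := by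
      rw [← Finset.sum_div]
      congr 1
      have := Finset.sum_range_id_mul_two k
      have h2 : ((∑ i ∈ Finset.range k, i : ℕ) : ℝ) * 2 = (k : ℝ) * ((k : ℝ) - 1) := by
        have hk1 : 1 ≤ k := hk
        calc ((∑ i ∈ Finset.range k, i : ℕ) : ℝ) * 2 = ((∑ i ∈ Finset.range k, i) * 2 : ℕ) := by
              push_cast; ring
        _ = ((k * (k - 1) : ℕ) : ℝ) := by rw [this]
        _ = (k : ℝ) * ((k : ℝ) - 1) := by
              push_cast [Nat.cast_sub hk1]; ring
      push_cast at h2 ⊢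
      linarith
    rw [hsum]
    have hle : (k:ℝ) * ((k:ℝ) - 1) ≤ (m:ℝ) := by
      have : (m:ℝ) = (k:ℝ)^2 := by rw [hm]; push_cast; ring
      have hk1 : (1:ℝ) ≤ (k:ℝ) := by exact_mod_cast hk
      nlinarith
    have hX : (k:ℝ)*((k:ℝ)-1)/2/(m:ℝ) ≤ 1/2 := by
      rw [div_div, div_le_div_iff₀ (by positivity) (by norm_num : (0:ℝ) < 2)]
      nlinarith
    linarith
  have hnn : (0:ℝ) ≤ (Nat.descFactorial m k : ℝ) / (m:ℝ) ^ k := by positivity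
  linarith
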